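/- Let f_i : [0,1] → ℝ be defined by f_i(x) = x_i · 4^{Σ_{j=0}^{i−1} x_j} · (Σ_{j=i}^{∞} (1 − x_j)/2^j)^2 (binary digits of x, finite expansion for dyadic rationals). Then ∫_0^1 f_1(x) dx = 1/24 and for each i ≥ 1, ∫_0^1 f_{i+1}(x) dx = (5/8) ∫_0^1 f_i(x) dx. -/

import Mathlib

/-- The `i`-th binary digit of `x ∈ [0,1]` (with `digit x 0` the units digit),
using the finite (terminating) expansion at dyadic rationals. -/
noncomputable def digit (x : ℝ) (i : ℕ) : ℕ := (⌊2 ^ i * x⌋).toNat % 2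

/-- The tail sum `Σ_{j=i}^{∞} (1 - x_j)/2^j`. -/
noncomputable def tail (x : ℝ) (i : ℕ) : ℝ :=
  ∑' j : ℕ, (1 - (digit x (i + j) : ℝ)) / 2 ^ (i + j)

/-- The function `F` from the cellular automaton `T_a`. -/
noncomputable def F (x : ℝ) : ℝ :=
  ∑' i : ℕ, (digit x i : ℝ) * 4 ^ (∑ j ∈ Finset.range i, digit x j) * (tail x i) ^ 2

/-- The `i`-th summand of the series defining `F`. -/
noncomputable def fi (i : ℕ) (x : ℝ) : ℝ :=
  (digit x i : ℝ) * 4 ^ (∑ j ∈ Finset.range i, digit x j) * (tail x i) ^ 2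

lemma digit_le_one (x : ℝ) (i : ℕ) : digit x i ≤ 1 := by
  have := Nat.mod_lt (⌊2 ^ i * x⌋).toNat (show 0 < 2 by norm_num)
  unfold digit; omega

lemma digit_shift (x : ℝ) (j : ℕ) : digit x (j + 1) = digit (2 * x) j := by
  unfold digit
  rw [show (2:ℝ) ^ (j+1) * x = 2 ^ j * (2 * x) by ring]

lemma digit_zero {x : ℝ} (h0 : 0 ≤ x) (h1 : x < 1) : digit x 0 = 0 := by
  unfold digit
  rw [show (2:ℝ)^0 * x = x by ring, Int.floor_eq_zero_iff.2 ⟨h0, h1⟩]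
  rfl

lemma digit_add_one {y : ℝ} (hy : 0 ≤ y) {j : ℕ} (hj : 1 ≤ j) :
    digit (y + 1) j = digit y j := by
  unfold digit
  have h1 : (2:ℝ) ^ j * (y + 1) = 2 ^ j * y + (2^j : ℤ) := by push_cast; ring
  rw [h1, Int.floor_add_intCast]
  have h2 : (0:ℤ) ≤ ⌊(2:ℝ) ^ j * y⌋ := Int.floor_nonneg.2 (by positivity)
  obtain ⟨k, hk⟩ : ∃ k, j = k + 1 := ⟨j - 1, by omega⟩
  have h3 : (⌊(2:ℝ) ^ j * y⌋ + (2^j : ℤ)).toNat = ⌊(2:ℝ) ^ j * y⌋.toNat + (2^j : ℤ).toNat := Int.toNat_add h2 (by positivity)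
  have h4 : ((2:ℤ)^j).toNat = 2^j := by rw [show ((2:ℤ)^j) = ((2^j : ℕ) : ℤ) by push_cast; ring, Int.toNat_natCast]
  rw [h3, h4, hk, pow_succ]
  omega

lemma term_nonneg (x : ℝ) (k : ℕ) : 0 ≤ (1 - (digit x k : ℝ)) / 2 ^ k := by
  have h := digit_le_one x k
  have h2 : (digit x k : ℝ) ≤ 1 := by exact_mod_cast h
  apply div_nonneg (by linarith) (by positivity)

lemma term_le (x : ℝ) (k : ℕ) : (1 - (digit x k : ℝ)) / 2 ^ k ≤ (1/2) ^ k := by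
  have : (0:ℝ) ≤ (digit x k : ℝ) := by positivity
  rw [div_pow, one_pow]
  apply div_le_div_of_nonneg_right (by linarith) (by positivity)

lemma summable_tail (x : ℝ) (i : ℕ) :
    Summable fun j : ℕ => (1 - (digit x (i + j) : ℝ)) / 2 ^ (i + j) := by
  apply Summable.of_nonneg_of_le (fun j => term_nonneg x (i+j))
    (fun j => le_trans (term_le x (i+j)) ?_) (summable_geometric_of_lt_one (r := (1/2:ℝ)) (by norm_num) (by norm_num))
  apply pow_le_pow_of_le_one (by norm_num) (by norm_num)
  omega

lemma tail_nonneg (x : ℝ) (i : ℕ) : 0 ≤ tail x i :=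
  tsum_nonneg fun j => term_nonneg x (i+j)

lemma tail_le_two (x : ℝ) (i : ℕ) : tail x i ≤ 2 := by
  have h1 : tail x i ≤ ∑' j : ℕ, ((1:ℝ)/2) ^ (i + j) := by
    apply Summable.tsum_le_tsum (fun j => term_le x (i+j)) (summable_tail x i)
    exact (summable_geometric_of_lt_one (r := (1/2:ℝ)) (by norm_num) (by norm_num)).comp_injective (add_right_injective i)
  refine h1.trans ?_
  have h2 : ∑' j : ℕ, ((1:ℝ)/2) ^ (i + j) ≤ ∑' j : ℕ, ((1:ℝ)/2) ^ j := by
    apply Summable.tsum_le_tsum (fun j => pow_le_pow_of_le_one (by norm_num) (by norm_num) (by omega))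
      ((summable_geometric_of_lt_one (r := (1/2:ℝ)) (by norm_num) (by norm_num)).comp_injective (add_right_injective i))
      (summable_geometric_of_lt_one (r := (1/2:ℝ)) (by norm_num) (by norm_num))
  refine h2.trans ?_
  rw [tsum_geometric_of_lt_one (r := (1/2:ℝ)) (by norm_num) (by norm_num)]
  norm_num

lemma tail_shift (x : ℝ) (i : ℕ) : tail x (i + 1) = tail (2 * x) i / 2 := by
  unfold tail
  rw [← tsum_div_const]
  congr 1
  funext j
  rw [show i + 1 + j = (i + j) + 1 by ring, digit_shift]
  rw [pow_succ]
  ring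

lemma tail_add_one {y : ℝ} (hy : 0 ≤ y) {i : ℕ} (hi : 1 ≤ i) :
    tail (y + 1) i = tail y i := by
  unfold tail
  congr 1
  funext j
  rw [digit_add_one hy (by omega)]

lemma fi_half {x : ℝ} (h0 : 0 ≤ x) (h1 : x < 1) (i : ℕ) :
    fi (i + 1) x = fi i (2 * x) / 4 := by
  unfold fi
  rw [digit_shift, tail_shift]
  rw [Finset.sum_range_succ']
  rw [digit_zero h0 h1]
  have : ∀ j, digit x (j + 1) = digit (2*x) j := fun j => digit_shift x j
  simp only [this, add_zero]
  ring

lemma fi_add_one {y : ℝ} (h0 : 0 ≤ y) (h1 : y < 1) {i : ℕ} (hi : 1 ≤ i) :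
    fi i (y + 1) = 4 * fi i y := by
  unfold fi
  rw [digit_add_one h0 hi, tail_add_one h0 hi]
  obtain ⟨k, hk⟩ : ∃ k, i = k + 1 := ⟨i - 1, by omega⟩
  subst hk
  rw [Finset.sum_range_succ', Finset.sum_range_succ']
  have : ∀ j, digit (y+1) (j + 1) = digit y (j + 1) := fun j => digit_add_one h0 (by omega)
  simp only [this, digit_zero h0 h1]
  have h2 : digit (y + 1) 0 = 1 := by
    unfold digit
    rw [show (2:ℝ)^0 * (y+1) = y + 1 by ring]
    rw [show ⌊y + 1⌋ = ⌊y⌋ + 1 by exact_mod_cast Int.floor_add_intCast y 1]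
    rw [Int.floor_eq_zero_iff.2 ⟨h0, h1⟩]
    rfl
  rw [h2, pow_succ]
  ring

lemma measurable_digit (i : ℕ) : Measurable fun x : ℝ => digit x i := by
  have h : Measurable fun x : ℝ => ⌊2 ^ i * x⌋ := Int.measurable_floor.comp (measurable_const_mul _)
  exact (measurable_from_top (f := fun n : ℤ => n.toNat % 2)).comp h

lemma measurable_term (k : ℕ) : Measurable fun x : ℝ => (1 - (digit x k : ℝ)) / 2 ^ k :=
  (measurable_const.sub ((measurable_from_top (f := fun n : ℕ => (n:ℝ))).comp (measurable_digit k))).div measurable_const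

lemma measurable_tail (i : ℕ) : Measurable fun x : ℝ => tail x i := by
  apply measurable_of_tendsto_metrizable
    (f := fun n x => ∑ j ∈ Finset.range n, (1 - (digit x (i+j) : ℝ)) / 2 ^ (i+j))
  · intro n
    exact Finset.measurable_sum _ (fun j _ => measurable_term (i+j))
  · rw [tendsto_pi_nhds]
    intro x
    exact (summable_tail x i).hasSum.tendsto_sum_nat

lemma measurable_fi (i : ℕ) : Measurable (fi i) := by
  unfold fi
  apply Measurable.mul
  apply Measurable.mul
  · exact (measurable_from_top (f := fun n : ℕ => (n:ℝ))).comp (measurable_digit i)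
  · exact (measurable_from_top (f := fun n : ℕ => ((4:ℝ)^n))).comp
      (Finset.measurable_sum _ (fun j _ => measurable_digit j))
  · exact (measurable_tail i).pow measurable_const

lemma fi_nonneg (i : ℕ) (x : ℝ) : 0 ≤ fi i x := by
  unfold fi
  positivity

lemma fi_bound (i : ℕ) (x : ℝ) : ‖fi i x‖ ≤ 4 ^ (i + 1) * 4 := by
  rw [Real.norm_eq_abs, abs_of_nonneg (fi_nonneg i x)]
  unfold fi
  have h1 : (digit x i : ℝ) ≤ 1 := by exact_mod_cast digit_le_one x i
  have h2 : (4:ℝ) ^ (∑ j ∈ Finset.range i, digit x j) ≤ 4 ^ (i + 1) := by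
    apply pow_le_pow_right₀ (by norm_num)
    have : ∑ j ∈ Finset.range i, digit x j ≤ ∑ j ∈ Finset.range i, 1 :=
      Finset.sum_le_sum (fun j _ => digit_le_one x j)
    simp at this
    omega
  have h3 : (tail x i) ^ 2 ≤ 4 := by
    have := tail_le_two x i
    have := tail_nonneg x i
    nlinarith
  have h4 : (0:ℝ) ≤ (digit x i : ℝ) := by positivity
  have h5 : (0:ℝ) ≤ (tail x i)^2 := sq_nonneg _
  have h6 : (0:ℝ) < 4 ^ (i+1) := by positivity
  have hB : (0:ℝ) ≤ 4 ^ (∑ j ∈ Finset.range i, digit x j) := by positivity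
  have hAB : (digit x i : ℝ) * 4 ^ (∑ j ∈ Finset.range i, digit x j) ≤ 4 ^ (i+1) := by
    nlinarith
  have hAB0 : (0:ℝ) ≤ (digit x i : ℝ) * 4 ^ (∑ j ∈ Finset.range i, digit x j) := by positivity
  calc (digit x i : ℝ) * 4 ^ (∑ j ∈ Finset.range i, digit x j) * (tail x i)^2
      ≤ 4 ^ (i+1) * 4 := mul_le_mul hAB h3 h5 (le_of_lt h6)

lemma intervalIntegrable_fi (i : ℕ) (a b : ℝ) : IntervalIntegrable (fi i) MeasureTheory.volume a b := by
  rw [intervalIntegrable_iff]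
  apply MeasureTheory.Integrable.mono' (g := fun _ : ℝ => (4:ℝ) ^ (i + 1) * 4)
    (MeasureTheory.integrableOn_const measure_Ioc_lt_top.ne enorm_ne_top)
    ((measurable_fi i).aestronglyMeasurable)
  exact Filter.Eventually.of_forall (fun x => fi_bound i x)

lemma floor_two_mul_aux (y : ℝ) : ⌊2 * y⌋ = 2 * ⌊y⌋ + ⌊2 * y⌋ % 2 := by
  have h1 : 2 * ⌊y⌋ ≤ ⌊2 * y⌋ := by
    apply Int.le_floor.2
    push_cast
    linarith [Int.floor_le y]
  have h2 : ⌊2 * y⌋ < 2 * ⌊y⌋ + 2 := by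
    apply Int.floor_lt.2
    push_cast
    linarith [Int.lt_floor_add_one y]
  omega

lemma partial_sum_digits {x : ℝ} (h0 : 0 ≤ x) (h1 : x < 1) (n : ℕ) :
    ∑ j ∈ Finset.range n, (digit x (1 + j) : ℝ) / 2 ^ (1 + j) = (⌊2 ^ n * x⌋ : ℝ) / 2 ^ n := by
  induction n with
  | zero => simp [Int.floor_eq_zero_iff.2 ⟨h0, h1⟩]
  | succ n ih =>
    rw [Finset.sum_range_succ, ih]
    have hnn : (0:ℤ) ≤ ⌊(2:ℝ) ^ (n+1) * x⌋ := Int.floor_nonneg.2 (by positivity)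
    have hd : (digit x (1 + n) : ℝ) = ((⌊(2:ℝ) ^ (n+1) * x⌋ % 2 : ℤ) : ℝ) := by
      unfold digit
      rw [show 1 + n = n + 1 by ring]
      have : ((⌊(2:ℝ) ^ (n+1) * x⌋.toNat % 2 : ℕ) : ℤ) = ⌊(2:ℝ) ^ (n+1) * x⌋ % 2 := by omega
      rw [← this]; norm_cast
    have hfl : (⌊(2:ℝ) ^ (n+1) * x⌋ : ℤ) = 2 * ⌊(2:ℝ) ^ n * x⌋ + ⌊(2:ℝ) ^ (n+1) * x⌋ % 2 := by
      have := floor_two_mul_aux ((2:ℝ) ^ n * x)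
      rw [show (2:ℝ) * (2 ^ n * x) = 2 ^ (n+1) * x by ring] at this
      exact this
    rw [hd]
    have h2n : ((2:ℝ) ^ n) ≠ 0 := by positivity
    have h2n1 : ((2:ℝ) ^ (n+1)) ≠ 0 := by positivity
    field_simp
    rw [show ((⌊x * (2:ℝ) ^ (n+1)⌋ : ℝ)) = 2 * (⌊(2:ℝ) ^ n * x⌋ : ℝ) + ((⌊x * (2:ℝ) ^ (n+1)⌋ % 2 : ℤ) : ℝ) by rw [mul_comm x]; exact_mod_cast congrArg (fun z : ℤ => (z:ℝ)) hfl]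
    ring

lemma summable_digits (x : ℝ) : Summable fun j : ℕ => (digit x (1 + j) : ℝ) / 2 ^ (1 + j) := by
  apply Summable.of_nonneg_of_le (fun j => by positivity) (fun j => ?_)
    ((summable_geometric_of_lt_one (r := (1/2:ℝ)) (by norm_num) (by norm_num)).comp_injective
      (add_right_injective 1))
  have h : (digit x (1 + j) : ℝ) ≤ 1 := by exact_mod_cast digit_le_one x (1 + j)
  show (digit x (1 + j) : ℝ) / 2 ^ (1 + j) ≤ (1/2) ^ (1 + j)
  rw [div_pow, one_pow]
  exact div_le_div_of_nonneg_right h (by positivity)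

lemma hasSum_digits {x : ℝ} (h0 : 0 ≤ x) (h1 : x < 1) :
    HasSum (fun j : ℕ => (digit x (1 + j) : ℝ) / 2 ^ (1 + j)) x := by
  rw [(summable_digits x).hasSum_iff_tendsto_nat]
  have heq : ∀ n : ℕ, ∑ j ∈ Finset.range n, (digit x (1 + j) : ℝ) / 2 ^ (1 + j)
      = (⌊2 ^ n * x⌋ : ℝ) / 2 ^ n := fun n => partial_sum_digits h0 h1 n
  simp only [heq]
  apply tendsto_of_tendsto_of_tendsto_of_le_of_le
    (g := fun n : ℕ => x - (1/2) ^ n) (h := fun _ : ℕ => x)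
  · have : Filter.Tendsto (fun n : ℕ => ((1:ℝ)/2) ^ n) Filter.atTop (nhds 0) :=
      tendsto_pow_atTop_nhds_zero_of_lt_one (by norm_num) (by norm_num)
    simpa using Filter.Tendsto.const_sub x this
  · exact tendsto_const_nhds
  · intro n
    have h2 : (0:ℝ) < 2 ^ n := by positivity
    show x - (1/2) ^ n ≤ (⌊2 ^ n * x⌋ : ℝ) / 2 ^ n
    rw [le_div_iff₀ h2]
    have := Int.lt_floor_add_one ((2:ℝ) ^ n * x)
    have hp : ((1:ℝ)/2) ^ n = 1 / 2 ^ n := by rw [div_pow, one_pow]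
    rw [hp]
    have h2' : ((2:ℝ) ^ n) ≠ 0 := ne_of_gt h2
    field_simp
    nlinarith [Int.lt_floor_add_one (x * (2:ℝ) ^ n)]
  · intro n
    have h2 : (0:ℝ) < 2 ^ n := by positivity
    show (⌊2 ^ n * x⌋ : ℝ) / 2 ^ n ≤ x
    rw [div_le_iff₀ h2]
    have := Int.floor_le ((2:ℝ) ^ n * x)
    linarith

lemma tail_one {x : ℝ} (h0 : 0 ≤ x) (h1 : x < 1) : tail x 1 = 1 - x := by
  unfold tail
  have hs1 : Summable fun j : ℕ => ((1:ℝ)/2) ^ (1 + j) :=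
    (summable_geometric_of_lt_one (r := (1/2:ℝ)) (by norm_num) (by norm_num)).comp_injective
      (add_right_injective 1)
  have hrw : ∀ j : ℕ, (1 - (digit x (1 + j) : ℝ)) / 2 ^ (1 + j)
      = ((1:ℝ)/2) ^ (1 + j) - (digit x (1 + j) : ℝ) / 2 ^ (1 + j) := by
    intro j
    rw [div_pow, one_pow]
    ring
  simp only [hrw]
  rw [Summable.tsum_sub hs1 (summable_digits x), (hasSum_digits h0 h1).tsum_eq]
  congr 1
  have : ∀ j : ℕ, ((1:ℝ)/2) ^ (1 + j) = (1/2) * (1/2) ^ j := fun j => by rw [pow_add, pow_one]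
  simp only [this]
  rw [tsum_mul_left, tsum_geometric_of_lt_one (by norm_num) (by norm_num)]
  norm_num

lemma ae_ne (c : ℝ) : ∀ᵐ x : ℝ, x ≠ c := by
  rw [MeasureTheory.ae_iff]
  simpa using MeasureTheory.measure_singleton c

lemma part1 : ∫ x in (0 : ℝ)..1, fi 1 x = 1 / 24 := by
  rw [← intervalIntegral.integral_add_adjacent_intervals
    (intervalIntegrable_fi 1 0 (1/2)) (intervalIntegrable_fi 1 (1/2) 1)]
  have hz : ∫ x in (0:ℝ)..(1/2), fi 1 x = ∫ x in (0:ℝ)..(1/2), (0:ℝ) := by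
    apply intervalIntegral.integral_congr_ae
    filter_upwards [ae_ne (1/2 : ℝ)] with x hx hmem
    rw [Set.uIoc_of_le (by norm_num : (0:ℝ) ≤ 1/2)] at hmem
    have hx0 : 0 < x := hmem.1
    have hx1 : x < 1/2 := lt_of_le_of_ne hmem.2 hx
    unfold fi
    have hd : digit x 1 = 0 := by
      unfold digit
      rw [show (2:ℝ)^1 * x = 2*x by ring, Int.floor_eq_zero_iff.2 ⟨by linarith, by linarith⟩]
      rfl
    rw [hd]
    norm_num
  have ho : ∫ x in (1/2:ℝ)..1, fi 1 x = ∫ x in (1/2:ℝ)..1, (1-x)^2 := by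
    apply intervalIntegral.integral_congr
    intro x hx
    rw [Set.uIcc_of_le (by norm_num : (1/2:ℝ) ≤ 1)] at hx
    obtain ⟨ha, hb⟩ := hx
    rcases eq_or_lt_of_le hb with heq | hlt
    · rw [heq]
      unfold fi
      have hd : digit 1 1 = 0 := by
        unfold digit
        norm_num
        decide
      rw [hd]
      norm_num
    · unfold fi
      have hd : digit x 1 = 1 := by
        unfold digit
        rw [show (2:ℝ)^1 * x = 2*x by ring]
        rw [show ⌊2*x⌋ = 1 by exact Int.floor_eq_iff.2 ⟨by push_cast; linarith, by push_cast; linarith⟩]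
        rfl
      rw [hd, tail_one (by linarith) hlt, Finset.sum_range_one,
        digit_zero (by linarith) hlt]
      norm_num
  rw [hz, ho]
  have hderiv : ∀ x ∈ Set.uIcc (1/2:ℝ) 1, HasDerivAt (fun y : ℝ => -((1-y)^3)/3) ((1-x)^2) x := by
    intro x _
    have h1 : HasDerivAt (fun y : ℝ => (1-y)) (-1) x := (hasDerivAt_id x).const_sub 1
    have h2 := ((h1.pow 3).neg).div_const 3
    exact h2.congr_deriv (by norm_num)
  rw [intervalIntegral.integral_eq_sub_of_hasDerivAt hderiv
    (Continuous.intervalIntegrable (by continuity) _ _)]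
  norm_num

lemma part2 {i : ℕ} (hi : 1 ≤ i) :
    ∫ x in (0 : ℝ)..1, fi (i + 1) x = (5 / 8) * ∫ x in (0 : ℝ)..1, fi i x := by
  have step1 : ∫ x in (0:ℝ)..1, fi (i+1) x = ∫ x in (0:ℝ)..1, fi i (2*x) / 4 := by
    apply intervalIntegral.integral_congr_ae
    filter_upwards [ae_ne (1 : ℝ)] with x hx hmem
    rw [Set.uIoc_of_le (by norm_num : (0:ℝ) ≤ 1)] at hmem
    exact fi_half (le_of_lt hmem.1) (lt_of_le_of_ne hmem.2 hx) i
  have step2 : ∫ x in (0:ℝ)..1, fi i (2*x) / 4 = (∫ x in (0:ℝ)..1, fi i (2*x)) / 4 :=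
    intervalIntegral.integral_div 4 _
  have step3 : ∫ x in (0:ℝ)..1, fi i (2*x) = (2:ℝ)⁻¹ • ∫ x in (0:ℝ)..2, fi i x := by
    have := intervalIntegral.integral_comp_mul_left (a := (0:ℝ)) (b := 1) (fi i)
      (c := 2) (by norm_num)
    simpa using this
  have step4 : ∫ x in (0:ℝ)..2, fi i x
      = (∫ x in (0:ℝ)..1, fi i x) + ∫ x in (1:ℝ)..2, fi i x :=
    (intervalIntegral.integral_add_adjacent_intervals
      (intervalIntegrable_fi i 0 1) (intervalIntegrable_fi i 1 2)).symm
  have step5 : ∫ x in (1:ℝ)..2, fi i x = ∫ x in (0:ℝ)..1, fi i (x + 1) := by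
    have := intervalIntegral.integral_comp_add_right (a := (0:ℝ)) (b := 1) (fi i) 1
    rw [this]
    norm_num
  have step6 : ∫ x in (0:ℝ)..1, fi i (x + 1) = ∫ x in (0:ℝ)..1, 4 * fi i x := by
    apply intervalIntegral.integral_congr_ae
    filter_upwards [ae_ne (1 : ℝ)] with x hx hmem
    rw [Set.uIoc_of_le (by norm_num : (0:ℝ) ≤ 1)] at hmem
    exact fi_add_one (le_of_lt hmem.1) (lt_of_le_of_ne hmem.2 hx) hi
  have step7 : ∫ x in (0:ℝ)..1, 4 * fi i x = 4 * ∫ x in (0:ℝ)..1, fi i x :=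
    intervalIntegral.integral_const_mul 4 _
  rw [step1, step2, step3, step4, step5, step6, step7]
  rw [smul_eq_mul]
  ring


theorem fi_integrals :
    (∫ x in (0 : ℝ)..1, fi 1 x = 1 / 24) ∧
    ∀ i : ℕ, 1 ≤ i → ∫ x in (0 : ℝ)..1, fi (i + 1) x = (5 / 8) * ∫ x in (0 : ℝ)..1, fi i x := by
  exact ⟨part1, fun i hi => part2 hi⟩
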